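/- arXiv:1509.07724 — 3 statements merged into one kernel-verified Lean document; each statement's English description precedes it below -/
import Mathlib

section
/- Let (W,w), (V,v) and (Ṽ,ṽ) be Bessel fusion sequences in H, and let Q ∈ L(𝒲,𝒱) and Q̃ ∈ L(𝒲,𝒱̃) satisfy T_{V,v} Q = T_{Ṽ,ṽ} Q̃. If both Q and Q̃ are component preserving, then V_i = Ṽ_i for every i = 1,…,m. -/
noncomputable section

open scoped InnerProductSpace

variable {𝕜 : Type} [RCLike 𝕜]
variable {H : Type} [NormedAddCommGroup H] [InnerProductSpace 𝕜 H] [FiniteDimensional 𝕜 H]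
variable {m : ℕ}

/-- The Hilbert space `𝒲 = ⊕ᵢ Wᵢ` of a fusion sequence, with the ℓ² inner product. -/
abbrev FFSpace (W : Fin m → Submodule 𝕜 H) : Type := PiLp 2 (fun i => ↥(W i))

/-- The synthesis operator `T_{W,w} : 𝒲 → H`, `(fᵢ)ᵢ ↦ Σᵢ wᵢ fᵢ`. -/
def synthOp (W : Fin m → Submodule 𝕜 H) (w : Fin m → ℝ) : FFSpace W →ₗ[𝕜] H where
  toFun f := ∑ i, (w i : 𝕜) • (f i : H)
  map_add' f g := by
    simp [Finset.sum_add_distrib, smul_add]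
  map_smul' c f := by
    simp [Finset.smul_sum]
    congr 1; funext i; rw [smul_comm]

/-- The analysis operator `T*_{W,w} : H → 𝒲`, `f ↦ (wᵢ π_{Wᵢ} f)ᵢ`. -/
def analysisOp (W : Fin m → Submodule 𝕜 H) (w : Fin m → ℝ) : H →ₗ[𝕜] FFSpace W where
  toFun f := WithLp.toLp 2 (fun i => (w i : 𝕜) • (Submodule.orthogonalProjectionOnto (W i) f))
  map_add' f g := by
    ext i; simp [smul_add]
  map_smul' c f := by
    ext i; simp; rw [smul_comm]

/-- The coordinate operator `M_{J,W} : 𝒲 → 𝒲`, keeping the coordinates in `J`. -/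
def MJ (W : Fin m → Submodule 𝕜 H) (J : Finset (Fin m)) : FFSpace W →ₗ[𝕜] FFSpace W where
  toFun f := WithLp.toLp 2 (fun j => if j ∈ J then f j else 0)
  map_add' f g := by
    ext j; by_cases h : j ∈ J <;> simp [h]
  map_smul' c f := by
    ext j; by_cases h : j ∈ J <;> simp [h]

/-- `Q : 𝒲 → 𝒱` is block-diagonal if `Q M_{j,W} 𝒲 ⊆ M_{j,V} 𝒱` for all `j`. -/
def IsBlockDiagonal (W V : Fin m → Submodule 𝕜 H) (Q : FFSpace W →ₗ[𝕜] FFSpace V) : Prop :=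
  ∀ j, LinearMap.range (Q ∘ₗ MJ W {j}) ≤ LinearMap.range (MJ V {j})

/-- `Q : 𝒲 → 𝒱` is component preserving if `Q M_{j,W} 𝒲 = M_{j,V} 𝒱` for all `j`. -/
def IsComponentPreserving (W V : Fin m → Submodule 𝕜 H) (Q : FFSpace W →ₗ[𝕜] FFSpace V) : Prop :=
  ∀ j, LinearMap.range (Q ∘ₗ MJ W {j}) = LinearMap.range (MJ V {j})

/-- The orthogonal projection onto `U` as an endomorphism of `H`. -/
def projL (U : Submodule 𝕜 H) : H →ₗ[𝕜] H :=
  U.subtype ∘ₗ (Submodule.orthogonalProjectionOnto U : H →L[𝕜] U).toLinearMap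

lemma map_synth_range_MJ
    {𝕜 : Type} [RCLike 𝕜] {H : Type} [NormedAddCommGroup H] [InnerProductSpace 𝕜 H]
    [FiniteDimensional 𝕜 H] {m : ℕ}
    (V : Fin m → Submodule 𝕜 H) (v : Fin m → ℝ) (i : Fin m) (hvi : 0 < v i) :
    Submodule.map (synthOp V v) (LinearMap.range (MJ V {i})) = V i := by
  ext g
  constructor
  · rintro ⟨-, ⟨f, rfl⟩, rfl⟩
    have : synthOp V v (MJ V {i} f) = (v i : 𝕜) • (f i : H) := by
      simp only [synthOp, MJ, LinearMap.coe_mk, AddHom.coe_mk]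
      rw [Finset.sum_eq_single i]
      · simp
      · intro j _ hj
        simp [Finset.mem_singleton, hj]
      · simp
    rw [this]
    exact Submodule.smul_mem _ _ (f i).2
  · intro hg
    refine ⟨MJ V {i} (WithLp.toLp 2 (Pi.single i ((v i : 𝕜)⁻¹ • (⟨g, hg⟩ : V i))) : FFSpace V), ⟨_, rfl⟩, ?_⟩
    simp only [synthOp, MJ, LinearMap.coe_mk, AddHom.coe_mk]
    rw [Finset.sum_eq_single i]
    · have hne : (v i : 𝕜) ≠ 0 := by
        exact_mod_cast ne_of_gt hvi
      simp [smul_smul, mul_inv_cancel₀ hne]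
    · intro j _ hj
      simp [Finset.mem_singleton, hj, Pi.single_eq_of_ne hj]
    · simp

/-- if `(W,w)`, `(V,v)`, `(Ṽ,ṽ)` are Bessel fusion sequences,
`T_{V,v} Q = T_{Ṽ,ṽ} Q̃` and both `Q`, `Q̃` are component preserving,
then `Vᵢ = Ṽᵢ` for all `i`. -/
theorem eq_of_componentPreserving_of_synth_comp_eq
    {𝕜 : Type} [RCLike 𝕜] {H : Type} [NormedAddCommGroup H] [InnerProductSpace 𝕜 H]
    [FiniteDimensional 𝕜 H] {m : ℕ}
    (W V V' : Fin m → Submodule 𝕜 H) (w v v' : Fin m → ℝ)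
    (hw : ∀ i, 0 < w i) (hv : ∀ i, 0 < v i) (hv' : ∀ i, 0 < v' i)
    (Q : FFSpace W →ₗ[𝕜] FFSpace V) (Q' : FFSpace W →ₗ[𝕜] FFSpace V')
    (heq : synthOp V v ∘ₗ Q = synthOp V' v' ∘ₗ Q')
    (hQ : IsComponentPreserving W V Q) (hQ' : IsComponentPreserving W V' Q') :
    ∀ i, V i = V' i := by
  intro i
  rw [← map_synth_range_MJ V v i (hv i), ← map_synth_range_MJ V' v' i (hv' i),
    ← hQ i, ← hQ' i, ← LinearMap.range_comp, ← LinearMap.range_comp,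
    ← LinearMap.comp_assoc, ← LinearMap.comp_assoc, heq]
end
end

section
/- Let (W,w) be an overcomplete fusion frame for H (i.e., a fusion frame that is not a Riesz fusion basis) such that W_i ≠ {0} for every i = 1,…,m. Then there exist a fusion frame (V,v) and a component preserving Q ∈ L(𝒲,𝒱) such that (V,v) is a Q-dual fusion frame of (W,w) and V_{i₀} ≠ S_{W,w}^{-1} W_{i₀} for some index i₀; in particular (V,v) differs from the canonical dual (S_{W,w}^{-1}W, v') for every choice of weights v'. -/
noncomputable section

open scoped InnerProductSpace

variable {𝕜 : Type} [RCLike 𝕜]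
variable {H : Type} [NormedAddCommGroup H] [InnerProductSpace 𝕜 H] [FiniteDimensional 𝕜 H]
variable {m : ℕ}

/-- The fusion frame operator `S_{W,w} = Σᵢ wᵢ² π_{Wᵢ}`. -/
def fusionFrameOp (W : Fin m → Submodule 𝕜 H) (w : Fin m → ℝ) : H →ₗ[𝕜] H :=
  ∑ i, ((w i ^ 2 : ℝ) : 𝕜) • projL (W i)


section Aux

variable {𝕜 : Type} [RCLike 𝕜] {H : Type} [NormedAddCommGroup H] [InnerProductSpace 𝕜 H]
  [FiniteDimensional 𝕜 H] {m : ℕ}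

lemma inner_proj_left {U : Submodule 𝕜 H} {z : H} (hz : z ∈ U) (f : H) :
    ⟪z, ((Submodule.orthogonalProjectionOnto U f : U) : H)⟫_𝕜 = ⟪z, f⟫_𝕜 := by
  have h := (Submodule.mem_orthogonal _ _).mp (Submodule.sub_starProjection_mem_orthogonal (K := U) f) z hz
  rw [inner_sub_right, sub_eq_zero] at h
  exact h.symm

lemma fusionFrameOp_apply (W : Fin m → Submodule 𝕜 H) (w : Fin m → ℝ) (f : H) :
    fusionFrameOp W w f = ∑ i, ((w i ^ 2 : ℝ) : 𝕜) • ((Submodule.orthogonalProjectionOnto (W i) f : ↥(W i)) : H) := by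
  simp [fusionFrameOp, projL]

lemma fusionFrameOp_injective (W : Fin m → Submodule 𝕜 H) (w : Fin m → ℝ) (hw : ∀ i, 0 < w i)
    (hW : ⨆ i, W i = ⊤) : Function.Injective (fusionFrameOp W w) := by
  rw [← LinearMap.ker_eq_bot, Submodule.eq_bot_iff]
  intro f hf
  have hf0 : fusionFrameOp W w f = 0 := hf
  have h0 : (⟪fusionFrameOp W w f, f⟫_𝕜) = 0 := by rw [hf0, inner_zero_left]
  rw [fusionFrameOp_apply, sum_inner] at h0
  have hterm : ∀ i, ⟪((w i ^ 2 : ℝ) : 𝕜) • ((Submodule.orthogonalProjectionOnto (W i) f : ↥(W i)) : H), f⟫_𝕜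
      = (((w i ^ 2) * ‖((Submodule.orthogonalProjectionOnto (W i) f : ↥(W i)) : H)‖ ^ 2 : ℝ) : 𝕜) := by
    intro i
    rw [inner_smul_left, RCLike.conj_ofReal,
      ← inner_proj_left (SetLike.coe_mem (Submodule.orthogonalProjectionOnto (W i) f)) f,
      inner_self_eq_norm_sq_to_K]
    push_cast
    ring
  rw [Finset.sum_congr rfl (fun i _ => hterm i), ← RCLike.ofReal_sum, RCLike.ofReal_eq_zero] at h0
  have hz : ∀ i ∈ Finset.univ, (w i ^ 2) * ‖((Submodule.orthogonalProjectionOnto (W i) f : ↥(W i)) : H)‖ ^ 2 = 0 := by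
    rw [← Finset.sum_eq_zero_iff_of_nonneg] at *
    · exact h0
    · intro i _; positivity
  have hproj : ∀ i, Submodule.orthogonalProjectionOnto (W i) f = 0 := by
    intro i
    have := hz i (Finset.mem_univ i)
    have hwne : (w i) ^ 2 ≠ 0 := pow_ne_zero _ (ne_of_gt (hw i))
    have hnorm : ‖((Submodule.orthogonalProjectionOnto (W i) f : ↥(W i)) : H)‖ = 0 := by
      have := mul_eq_zero.mp this
      rcases this with h | h
      · exact absurd h hwne
      · exact pow_eq_zero_iff (n := 2) (by norm_num) |>.mp h
    have : ((Submodule.orthogonalProjectionOnto (W i) f : ↥(W i)) : H) = 0 := norm_eq_zero.mp hnorm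
    exact Subtype.ext this
  have hmem : f ∈ (⨆ i, W i)ᗮ := by
    rw [← Submodule.iInf_orthogonal]
    exact Submodule.mem_iInf _ |>.mpr fun i => Submodule.orthogonalProjectionOnto_eq_zero_iff.mp (hproj i)
  rw [hW, Submodule.top_orthogonal_eq_bot] at hmem
  exact hmem

end Aux

/-- an overcomplete fusion frame `(W,w)` with nontrivial subspaces admits a
component preserving dual fusion frame whose subspaces differ from those of the canonical
duals `(S_{W,w}⁻¹ W, v')` (hence it differs from the canonical dual for every weights). -/
theorem exists_nonCanonical_componentPreserving_dual
    {𝕜 : Type} [RCLike 𝕜] {H : Type} [NormedAddCommGroup H] [InnerProductSpace 𝕜 H]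
    [FiniteDimensional 𝕜 H] {m : ℕ}
    (W : Fin m → Submodule 𝕜 H) (w : Fin m → ℝ) (hw : ∀ i, 0 < w i)
    (hW : ⨆ i, W i = ⊤) (hnotRiesz : ¬ iSupIndep W) (hne : ∀ i, W i ≠ ⊥) :
    ∃ (V : Fin m → Submodule 𝕜 H) (v : Fin m → ℝ), (∀ i, 0 < v i) ∧
      ∃ Q : FFSpace W →ₗ[𝕜] FFSpace V,
        (⨆ i, V i = ⊤) ∧ IsComponentPreserving W V Q ∧
        synthOp V v ∘ₗ Q ∘ₗ analysisOp W w = LinearMap.id ∧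
        ∃ i₀, V i₀ ≠ Submodule.comap (fusionFrameOp W w) (W i₀) := by
  classical
  have hSinj : Function.Injective (fusionFrameOp W w) := fusionFrameOp_injective W w hw hW
  have hSbij : Function.Bijective (fusionFrameOp W w) :=
    ⟨hSinj, LinearMap.injective_iff_surjective.mp hSinj⟩
  set E : H ≃ₗ[𝕜] H := LinearEquiv.ofBijective (fusionFrameOp W w) hSbij with hEdef
  have hEapp : ∀ f, E f = fusionFrameOp W w f := fun f => rfl
  -- extract a nontrivial kernel tuple (a j) with a j ∈ W j, ∑ a j = 0, a i₀ ≠ 0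
  rw [iSupIndep_def] at hnotRiesz
  push_neg at hnotRiesz
  obtain ⟨i₀, hdis⟩ := hnotRiesz
  rw [Submodule.disjoint_def] at hdis
  push_neg at hdis
  obtain ⟨x, hxW, hxSup, hx0⟩ := hdis
  rw [Submodule.mem_iSup_iff_exists_finsupp] at hxSup
  obtain ⟨g, hg, hgsum⟩ := hxSup
  have hgmem : ∀ j, g j ∈ W j := by
    intro j
    by_cases hj : j = i₀
    · have h := hg j
      rw [hj] at h ⊢
      have h0 : g i₀ = 0 := by simpa using h
      rw [h0]; exact Submodule.zero_mem _
    · have := hg j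
      rwa [iSup_pos hj] at this
  have hgi₀ : g i₀ = 0 := by
    have := hg i₀
    simpa using this
  have hgsum' : ∑ j, g j = x := by
    rw [← hgsum, Finsupp.sum_fintype]
    intro i; rfl
  set a : Fin m → H := fun j => (if j = i₀ then x else 0) - g j with hadef
  have haW : ∀ j, a j ∈ W j := by
    intro j
    by_cases hj : j = i₀
    · subst hj; simpa [hadef] using Submodule.sub_mem _ hxW (hgmem j)
    · simpa [hadef, hj] using Submodule.neg_mem _ (hgmem j)
  have hai₀ : a i₀ = x := by simp [hadef, hgi₀]
  have hasum : ∑ j, a j = 0 := by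
    simp only [hadef, Finset.sum_sub_distrib, hgsum', Finset.sum_ite_eq', Finset.mem_univ,
      if_true]
    simp
  -- the perturbation vector and the block operators
  set u : H := -(((‖a i₀‖ : 𝕜)) ^ 2)⁻¹ • E.symm (((w i₀ ^ 2 : ℝ) : 𝕜) • a i₀) with hudef
  set B : Fin m → (H →ₗ[𝕜] H) := fun j =>
    (E.symm.toLinearMap ∘ₗ (((w j ^ 2 : ℝ) : 𝕜) • LinearMap.id)) +
      (LinearMap.smulRight ((innerSL 𝕜 (a j)).toLinearMap) u) with hBdef
  have hB : ∀ j (y : H), B j y = E.symm (((w j ^ 2 : ℝ) : 𝕜) • y) + ⟪a j, y⟫_𝕜 • u := by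
    intro j y; rfl
  have hnormne : ((‖a i₀‖ : 𝕜)) ^ 2 ≠ 0 := by
    have : a i₀ ≠ 0 := by rw [hai₀]; exact hx0
    simpa using norm_ne_zero_iff.mpr this
  have hBa : B i₀ (a i₀) = 0 := by
    rw [hB, inner_self_eq_norm_sq_to_K, hudef, smul_smul, mul_neg,
      mul_inv_cancel₀ hnormne, neg_smul, one_smul]
    exact add_neg_cancel _
  set V : Fin m → Submodule 𝕜 H := fun j => Submodule.map (B j) (W j) with hVdef
  set v : Fin m → ℝ := fun j => (w j)⁻¹ with hvdef
  have hv : ∀ i, 0 < v i := fun i => inv_pos.mpr (hw i)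
  -- the operator Q
  set Q : FFSpace W →ₗ[𝕜] FFSpace V :=
    { toFun := fun f => WithLp.toLp 2 (fun j => ⟨B j (f j), Submodule.mem_map_of_mem (SetLike.coe_mem (f j))⟩)
      map_add' := by
        intro f g'
        apply PiLp.ext; intro j
        apply Subtype.ext
        show B j (((f + g') j : H)) = B j (f j) + B j (g' j)
        rw [show (((f + g') j : H)) = (f j : H) + (g' j : H) from rfl, map_add]
      map_smul' := by
        intro c f
        apply PiLp.ext; intro j
        apply Subtype.ext
        show B j (((c • f) j : H)) = c • B j (f j)
        rw [show (((c • f) j : H)) = c • (f j : H) from rfl, map_smul] } with hQdef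
  have hQapp : ∀ (f : FFSpace W) (j : Fin m), ((Q f j : ↥(V j)) : H) = B j (f j) :=
    fun f j => rfl
  -- the key reconstruction identity
  have hkey : ∀ f : H, ∑ j, B j ((Submodule.orthogonalProjectionOnto (W j) f : ↥(W j)) : H) = f := by
    intro f
    have h1 : ∀ j, B j ((Submodule.orthogonalProjectionOnto (W j) f : ↥(W j)) : H)
        = E.symm (((w j ^ 2 : ℝ) : 𝕜) • ((Submodule.orthogonalProjectionOnto (W j) f : ↥(W j)) : H))
          + ⟪a j, f⟫_𝕜 • u := by
      intro j
      rw [hB, inner_proj_left (haW j)]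
    rw [Finset.sum_congr rfl (fun j _ => h1 j), Finset.sum_add_distrib, ← map_sum,
      ← Finset.sum_smul, ← sum_inner, hasum, inner_zero_left, zero_smul, add_zero,
      ← fusionFrameOp_apply, ← hEapp, LinearEquiv.symm_apply_apply]
  -- (V, v) is a fusion frame
  have hVtop : ⨆ i, V i = ⊤ := by
    rw [Submodule.eq_top_iff']
    intro f
    rw [← hkey f]
    exact Submodule.sum_mem _ fun j _ =>
      (le_iSup V j) (Submodule.mem_map_of_mem (SetLike.coe_mem _))
  -- Q is component preserving
  have hMJW : ∀ (j : Fin m) (f : FFSpace W) (k : Fin m),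
      ((MJ W {j} f) k : H) = if k = j then (f k : H) else 0 := by
    intro j f k
    show (((if k ∈ ({j} : Finset (Fin m)) then f k else 0) : ↥(W k)) : H) = _
    by_cases hk : k = j <;> simp [hk]
  have hMJV : ∀ (j : Fin m) (f : FFSpace V) (k : Fin m),
      ((MJ V {j} f) k : H) = if k = j then (f k : H) else 0 := by
    intro j f k
    show (((if k ∈ ({j} : Finset (Fin m)) then f k else 0) : ↥(V k)) : H) = _
    by_cases hk : k = j <;> simp [hk]
  have hcp : IsComponentPreserving W V Q := by
    intro j
    apply le_antisymm
    · rintro _ ⟨f, rfl⟩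
      refine ⟨Q (MJ W {j} f), ?_⟩
      apply PiLp.ext; intro k
      apply Subtype.ext
      rw [LinearMap.comp_apply, hQapp, hMJW, hMJV]
      by_cases hk : k = j
      · subst hk
        rw [if_pos rfl, if_pos rfl, hQapp, hMJW, if_pos rfl]
      · rw [if_neg hk, if_neg hk, map_zero]
    · rintro _ ⟨g', rfl⟩
      obtain ⟨y, hyW, hBy⟩ := Submodule.mem_map.mp (g' j).2
      set f : FFSpace W :=
        WithLp.toLp 2 (fun k => if h : k = j then (⟨y, by rw [h]; exact hyW⟩ : ↥(W k)) else 0) with hfdef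
      have hfj : ((f j : ↥(W j)) : H) = y := by rw [hfdef]; simp
      have hfk : ∀ k, k ≠ j → ((f k : ↥(W k)) : H) = 0 := by
        intro k hk; rw [hfdef]; simp [hk]
      refine ⟨f, ?_⟩
      apply PiLp.ext; intro k
      apply Subtype.ext
      rw [LinearMap.comp_apply, hQapp, hMJW, hMJV]
      by_cases hk : k = j
      · subst hk
        rw [if_pos rfl, if_pos rfl, hfj]
        exact hBy
      · rw [if_neg hk, if_neg hk, map_zero]
  -- duality
  have hdual : synthOp V v ∘ₗ Q ∘ₗ analysisOp W w = LinearMap.id := by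
    apply LinearMap.ext
    intro f
    rw [LinearMap.comp_apply, LinearMap.comp_apply, LinearMap.id_apply]
    show ∑ j, ((v j : ℝ) : 𝕜) • ((Q (analysisOp W w f) j : ↥(V j)) : H) = f
    have hterm : ∀ j, ((v j : ℝ) : 𝕜) • ((Q (analysisOp W w f) j : ↥(V j)) : H)
        = B j ((Submodule.orthogonalProjectionOnto (W j) f : ↥(W j)) : H) := by
      intro j
      rw [hQapp]
      have hco : ((analysisOp W w f j : ↥(W j)) : H)
          = ((w j : ℝ) : 𝕜) • ((Submodule.orthogonalProjectionOnto (W j) f : ↥(W j)) : H) := rfl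
      rw [hco, map_smul, smul_smul, ← RCLike.ofReal_mul, hvdef,
        inv_mul_cancel₀ (ne_of_gt (hw j))]
      simp
    rw [Finset.sum_congr rfl (fun j _ => hterm j), hkey]
  -- V i₀ differs from the canonical dual subspace
  have hcomapfin : Module.finrank 𝕜 (Submodule.comap (fusionFrameOp W w) (W i₀))
      = Module.finrank 𝕜 (W i₀) := by
    rw [show Submodule.comap (fusionFrameOp W w) (W i₀)
        = Submodule.comap (E : H →ₗ[𝕜] H) (W i₀) from rfl,
      Submodule.comap_equiv_eq_map_symm, LinearEquiv.finrank_map_eq]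
  have hlt : Module.finrank 𝕜 (V i₀) < Module.finrank 𝕜 (W i₀) := by
    set gr : ↥(W i₀) →ₗ[𝕜] H := (B i₀) ∘ₗ (W i₀).subtype with hgrdef
    have hr : LinearMap.range gr = V i₀ := by
      rw [hgrdef, LinearMap.range_comp, Submodule.range_subtype]
    have hrn := gr.finrank_range_add_finrank_ker
    have hker : 0 < Module.finrank 𝕜 (LinearMap.ker gr) := by
      rw [Module.finrank_pos_iff]
      refine nontrivial_of_ne ⟨⟨a i₀, haW i₀⟩, ?_⟩ 0 ?_
      · show B i₀ (a i₀) = 0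
        exact hBa
      · intro hc
        apply hx0
        rw [← hai₀]
        exact congrArg (fun z => ((z : ↥(W i₀)) : H)) (congrArg Subtype.val hc)
    rw [hr] at hrn
    omega
  refine ⟨V, v, hv, Q, hVtop, hcp, hdual, i₀, ?_⟩
  intro hEq
  rw [hEq, hcomapfin] at hlt
  exact lt_irrefl _ hlt
end
end

section
/- Let (W,w) be a fusion frame for H such that w_i² ‖S_{W,w}^{-1} π_{W_i}‖_F = c for some constant c and every i = 1,…,m. Then S_{W,w}^{-1} T_{W,w} is the unique element of the set {A ∈ 𝔏_{T*_{W,w}} : max_{1≤i≤m} ‖A M_i T*_{W,w}‖_F = min_{B ∈ 𝔏_{T*_{W,w}}} max_{1≤i≤m} ‖B M_i T*_{W,w}‖_F}. -/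
set_option maxHeartbeats 1000000


noncomputable section

open scoped InnerProductSpace

variable {𝕜 : Type} [RCLike 𝕜]
variable {H : Type} [NormedAddCommGroup H] [InnerProductSpace 𝕜 H] [FiniteDimensional 𝕜 H]
variable {m : ℕ}

/-- The squared Frobenius norm `‖B‖_F² = tr(B*B)` of a linear map between
finite-dimensional inner product spaces. -/
def frobSq {𝕜 : Type} [RCLike 𝕜] {E F : Type} [NormedAddCommGroup E] [InnerProductSpace 𝕜 E]
    [FiniteDimensional 𝕜 E] [NormedAddCommGroup F] [InnerProductSpace 𝕜 F]
    [FiniteDimensional 𝕜 F] (B : E →ₗ[𝕜] F) : ℝ :=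
  RCLike.re (LinearMap.trace 𝕜 E (LinearMap.adjoint B ∘ₗ B))

/-- The worst-case one-erasure error `max_i ‖A Mᵢ T*_{W,w}‖_F` of a reconstruction
operator `A : 𝒲 → H`. -/
def maxErr (W : Fin m → Submodule 𝕜 H) (w : Fin m → ℝ) (A : FFSpace W →L[𝕜] H) : ℝ :=
  ⨆ i : Fin m, Real.sqrt (frobSq ((A : FFSpace W →ₗ[𝕜] H) ∘ₗ MJ W {i} ∘ₗ analysisOp W w))

/-- The set of left inverses of `T*_{W,w}` minimizing the worst-case one-erasure error. -/
def optimalSet (W : Fin m → Submodule 𝕜 H) (w : Fin m → ℝ) : Set (FFSpace W →L[𝕜] H) :=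
  {A | A ∘L LinearMap.toContinuousLinearMap (analysisOp W w) = ContinuousLinearMap.id 𝕜 H ∧
    maxErr W w A =
      ⨅ B : {B : FFSpace W →L[𝕜] H //
          B ∘L LinearMap.toContinuousLinearMap (analysisOp W w) = ContinuousLinearMap.id 𝕜 H},
        maxErr W w ↑B}

section Helpers
variable {𝕜 : Type} [RCLike 𝕜]
variable {H : Type} [NormedAddCommGroup H] [InnerProductSpace 𝕜 H] [FiniteDimensional 𝕜 H]
variable {m : ℕ}

local notation "⟪" x ", " y "⟫" => @inner 𝕜 _ _ x y

lemma my_trace_eq_sum_inner (f : H →ₗ[𝕜] H) :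
    LinearMap.trace 𝕜 H f = ∑ i, ⟪(stdOrthonormalBasis 𝕜 H) i, f ((stdOrthonormalBasis 𝕜 H) i)⟫ := by
  classical
  rw [LinearMap.trace_eq_matrix_trace 𝕜 (stdOrthonormalBasis 𝕜 H).toBasis f, Matrix.trace]
  congr 1
  funext i
  rw [Matrix.diag_apply, LinearMap.toMatrix_apply,
    OrthonormalBasis.coe_toBasis_repr_apply, (stdOrthonormalBasis 𝕜 H).repr_apply_apply,
    OrthonormalBasis.coe_toBasis]

/-- Vectorization of an endomorphism of `H` w.r.t. the standard orthonormal basis. -/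
def Phi (X : H →ₗ[𝕜] H) : PiLp 2 (fun _ : Fin (Module.finrank 𝕜 H) => H) :=
  WithLp.toLp 2 (fun i => X (stdOrthonormalBasis 𝕜 H i))

lemma Phi_injective : Function.Injective (Phi (𝕜 := 𝕜) (H := H)) := by
  intro X Y hXY
  apply (stdOrthonormalBasis 𝕜 H).toBasis.ext
  intro i
  simpa [OrthonormalBasis.coe_toBasis, Phi] using congrArg (fun v => v i) hXY

lemma trace_adjoint_comp (X Y : H →ₗ[𝕜] H) :
    LinearMap.trace 𝕜 H (LinearMap.adjoint Y ∘ₗ X) = ⟪Phi Y, Phi X⟫ := by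
  rw [my_trace_eq_sum_inner, PiLp.inner_apply]
  congr 1; funext i
  rw [LinearMap.comp_apply, LinearMap.adjoint_inner_right]
  rfl

lemma frobSq_eq_norm_Phi_sq (X : H →ₗ[𝕜] H) : frobSq X = ‖Phi X‖ ^ 2 := by
  rw [frobSq, trace_adjoint_comp, ← inner_self_eq_norm_sq (𝕜 := 𝕜)]

lemma frobSq_nonneg (X : H →ₗ[𝕜] H) : 0 ≤ frobSq X := by
  rw [frobSq_eq_norm_Phi_sq]; positivity

lemma sqrt_frobSq_eq (X : H →ₗ[𝕜] H) : Real.sqrt (frobSq X) = ‖Phi X‖ := by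
  rw [frobSq_eq_norm_Phi_sq, Real.sqrt_sq (norm_nonneg _)]

lemma Phi_zero : Phi (0 : H →ₗ[𝕜] H) = 0 := PiLp.ext fun _ => rfl

lemma Phi_smul (a : 𝕜) (X : H →ₗ[𝕜] H) : Phi (a • X) = a • Phi X := PiLp.ext fun _ => rfl

lemma frobSq_eq_zero_iff (X : H →ₗ[𝕜] H) : frobSq X = 0 ↔ X = 0 := by
  rw [frobSq_eq_norm_Phi_sq]
  constructor
  · intro hX
    apply Phi_injective
    have h0 : Phi X = 0 := by
      have := pow_eq_zero_iff (n := 2) (by norm_num) |>.mp hX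
      simpa [norm_eq_zero] using this
    rw [h0, Phi_zero]
  · rintro rfl
    rw [Phi_zero]; simp

-- synthOp ∘ analysisOp = fusionFrameOp
lemma synth_comp_analysis (W : Fin m → Submodule 𝕜 H) (w : Fin m → ℝ) :
    synthOp W w ∘ₗ analysisOp W w = fusionFrameOp W w := by
  apply LinearMap.ext
  intro f
  simp [synthOp, analysisOp, fusionFrameOp, projL, smul_smul]
  congr 1; funext i
  rw [sq]

lemma sum_MJ (W : Fin m → Submodule 𝕜 H) : ∑ i, MJ W {i} = LinearMap.id := by
  apply LinearMap.ext; intro g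
  have : (∑ i, MJ W {i}) g = ∑ i, (MJ W {i}) g := by
    rw [LinearMap.sum_apply]
  rw [this]
  ext j
  have : (∑ i, (MJ W {i}) g) j = ∑ i, ((MJ W {i}) g) j := by
    rw [WithLp.ofLp_sum]; exact Finset.sum_apply j Finset.univ _
  rw [this]
  simp [MJ, Finset.sum_ite_eq]

lemma adjoint_projL (U : Submodule 𝕜 H) : LinearMap.adjoint (projL U) = projL U := by
  symm
  rw [LinearMap.eq_adjoint_iff]
  intro x y
  exact Submodule.inner_starProjection_left_eq_right U x y

lemma MJ_analysis_projL (W : Fin m → Submodule 𝕜 H) (w : Fin m → ℝ) (i : Fin m) :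
    (MJ W {i} ∘ₗ analysisOp W w) ∘ₗ projL (W i) = MJ W {i} ∘ₗ analysisOp W w := by
  apply LinearMap.ext; intro f
  ext j
  simp only [LinearMap.comp_apply, MJ, analysisOp, LinearMap.coe_mk, AddHom.coe_mk]
  by_cases hj : j ∈ ({i} : Finset (Fin m))
  · simp only [hj, if_true]
    have hji : j = i := Finset.mem_singleton.mp hj
    subst hji
    congr 1
    simp [projL, Submodule.orthogonalProjectionOnto_mem_subspace_eq_self,
      Submodule.orthogonalProjectionOnto_starProjection_of_le (le_refl (W j))]
  · simp [hj]

lemma synth_MJ_analysis (W : Fin m → Submodule 𝕜 H) (w : Fin m → ℝ) (i : Fin m) :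
    synthOp W w ∘ₗ MJ W {i} ∘ₗ analysisOp W w = ((w i ^ 2 : ℝ) : 𝕜) • projL (W i) := by
  apply LinearMap.ext; intro f
  simp only [LinearMap.comp_apply, synthOp, analysisOp, MJ, LinearMap.coe_mk, AddHom.coe_mk,
    LinearMap.smul_apply]
  rw [Finset.sum_eq_single i]
  · simp [projL, smul_smul, sq]
  · intro j _ hji
    simp [Finset.mem_singleton, hji]
  · intro hi; exact absurd (Finset.mem_univ i) hi

lemma canonical_left_inverse (W : Fin m → Submodule 𝕜 H) (w : Fin m → ℝ) (Sinv : H →ₗ[𝕜] H)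
    (h' : Sinv ∘ₗ fusionFrameOp W w = LinearMap.id) :
    (Sinv ∘ₗ synthOp W w) ∘ₗ analysisOp W w = LinearMap.id := by
  rw [LinearMap.comp_assoc, synth_comp_analysis, h']

lemma trace_key (W : Fin m → Submodule 𝕜 H) (w : Fin m → ℝ) (Sinv : H →ₗ[𝕜] H)
    (B : FFSpace W →ₗ[𝕜] H) (i : Fin m) :
    LinearMap.trace 𝕜 H (LinearMap.adjoint (((w i ^ 2 : ℝ) : 𝕜) • (Sinv ∘ₗ projL (W i))) ∘ₗ
        (B ∘ₗ (MJ W {i} ∘ₗ analysisOp W w))) =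
      ((w i ^ 2 : ℝ) : 𝕜) *
        LinearMap.trace 𝕜 H (LinearMap.adjoint Sinv ∘ₗ (B ∘ₗ (MJ W {i} ∘ₗ analysisOp W w))) := by
  have hadj : LinearMap.adjoint (((w i ^ 2 : ℝ) : 𝕜) • (Sinv ∘ₗ projL (W i)))
      = ((w i ^ 2 : ℝ) : 𝕜) • (projL (W i) ∘ₗ LinearMap.adjoint Sinv) := by
    rw [map_smulₛₗ, LinearMap.adjoint_comp, adjoint_projL, RCLike.conj_ofReal]
  rw [hadj, LinearMap.smul_comp, map_smul, smul_eq_mul]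
  congr 1
  have e1 : (projL (W i) ∘ₗ LinearMap.adjoint Sinv) ∘ₗ (B ∘ₗ (MJ W {i} ∘ₗ analysisOp W w))
      = projL (W i) ∘ₗ (LinearMap.adjoint Sinv ∘ₗ (B ∘ₗ (MJ W {i} ∘ₗ analysisOp W w))) := rfl
  have e2 : (LinearMap.adjoint Sinv ∘ₗ (B ∘ₗ (MJ W {i} ∘ₗ analysisOp W w))) ∘ₗ projL (W i)
      = LinearMap.adjoint Sinv ∘ₗ (B ∘ₗ ((MJ W {i} ∘ₗ analysisOp W w) ∘ₗ projL (W i))) := rfl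
  rw [e1, LinearMap.trace_comp_comm', e2, MJ_analysis_projL]

lemma sum_MJ_apply (W : Fin m → Submodule 𝕜 H) (g : FFSpace W) :
    ∑ i, (MJ W {i}) g = g := by
  have := congrArg (fun (T : FFSpace W →ₗ[𝕜] FFSpace W) => T g) (sum_MJ W)
  simpa [LinearMap.sum_apply] using this

lemma sum_block (W : Fin m → Submodule 𝕜 H) (w : Fin m → ℝ) (Sinv : H →ₗ[𝕜] H)
    (B : FFSpace W →ₗ[𝕜] H) :
    ∑ i, (LinearMap.adjoint Sinv ∘ₗ (B ∘ₗ (MJ W {i} ∘ₗ analysisOp W w)))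
      = LinearMap.adjoint Sinv ∘ₗ (B ∘ₗ analysisOp W w) := by
  apply LinearMap.ext; intro f
  rw [LinearMap.sum_apply]
  simp only [LinearMap.comp_apply]
  rw [← map_sum, ← map_sum, sum_MJ_apply]

end Helpers

/-- if `(W,w)` is a fusion frame with `wᵢ² ‖S_{W,w}⁻¹ π_{Wᵢ}‖_F = c` for
every `i`, then `S_{W,w}⁻¹ T_{W,w}` is the unique left inverse of `T*_{W,w}` minimizing
the worst-case one-erasure error. -/
theorem canonical_unique_optimal
    {𝕜 : Type} [RCLike 𝕜] {H : Type} [NormedAddCommGroup H] [InnerProductSpace 𝕜 H]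
    [FiniteDimensional 𝕜 H] {m : ℕ}
    (W : Fin m → Submodule 𝕜 H) (w : Fin m → ℝ) (hw : ∀ i, 0 < w i) (hW : ⨆ i, W i = ⊤)
    (Sinv : H →ₗ[𝕜] H)
    (h : fusionFrameOp W w ∘ₗ Sinv = LinearMap.id)
    (h' : Sinv ∘ₗ fusionFrameOp W w = LinearMap.id)
    (c : ℝ) (hc : ∀ i, w i ^ 2 * Real.sqrt (frobSq (Sinv ∘ₗ projL (W i))) = c) :
    optimalSet W w = {LinearMap.toContinuousLinearMap (Sinv ∘ₗ synthOp W w)} := by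
  classical
  rcases subsingleton_or_nontrivial H with hs | hnt
  · -- degenerate case: H is trivial
    have hsub : Subsingleton (FFSpace W →L[𝕜] H) :=
      ⟨fun a b => ContinuousLinearMap.ext fun x => Subsingleton.elim _ _⟩
    ext A
    simp only [optimalSet, Set.mem_setOf_eq, Set.mem_singleton_iff]
    constructor
    · intro _; exact Subsingleton.elim _ _
    · intro _
      refine ⟨Subsingleton.elim _ _, ?_⟩
      have hne : Nonempty {B : FFSpace W →L[𝕜] H //
          B ∘L LinearMap.toContinuousLinearMap (analysisOp W w) = ContinuousLinearMap.id 𝕜 H} :=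
        ⟨⟨A, Subsingleton.elim _ _⟩⟩
      have heq : ∀ B : {B : FFSpace W →L[𝕜] H //
          B ∘L LinearMap.toContinuousLinearMap (analysisOp W w) = ContinuousLinearMap.id 𝕜 H},
          maxErr W w ↑B = maxErr W w A := fun B => congrArg (maxErr W w) (Subsingleton.elim _ _)
      rw [iInf_congr heq, ciInf_const]
  -- main case
  haveI hm : Nonempty (Fin m) := by
    by_contra hne
    rw [not_nonempty_iff] at hne
    have hbot : (⨆ i, W i) = ⊥ := by rw [iSup_of_empty]
    rw [hW] at hbot
    obtain ⟨x, hx⟩ := exists_ne (0 : H)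
    exact hx ((Submodule.mem_bot 𝕜).mp (hbot ▸ Submodule.mem_top))
  -- positivity of c
  have hc0 : 0 < c := by
    have hWi : ∃ i, W i ≠ ⊥ := by
      by_contra hn
      push_neg at hn
      have hbot : (⨆ i, W i) = ⊥ := by simp [hn]
      rw [hW] at hbot
      obtain ⟨x, hx⟩ := exists_ne (0 : H)
      exact hx ((Submodule.mem_bot 𝕜).mp (hbot ▸ Submodule.mem_top))
    obtain ⟨i₀, hi₀⟩ := hWi
    obtain ⟨x, hxmem, hx0⟩ := Submodule.exists_mem_ne_zero_of_ne_bot hi₀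
    have hproj : projL (W i₀) ≠ 0 := by
      intro hp
      apply hx0
      have : projL (W i₀) x = x := by
        exact congrArg Subtype.val (Submodule.orthogonalProjectionOnto_mem_subspace_eq_self (K := W i₀) ⟨x, hxmem⟩)
      rw [hp] at this
      simpa using this.symm
    have hSp : Sinv ∘ₗ projL (W i₀) ≠ 0 := by
      intro hz
      apply hproj
      have : projL (W i₀) = fusionFrameOp W w ∘ₗ (Sinv ∘ₗ projL (W i₀)) := by
        rw [← LinearMap.comp_assoc, h, LinearMap.id_comp]
      rw [this, hz, LinearMap.comp_zero]
    have hfpos : 0 < frobSq (Sinv ∘ₗ projL (W i₀)) :=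
      lt_of_le_of_ne (frobSq_nonneg _) (Ne.symm (fun he => hSp ((frobSq_eq_zero_iff _).mp he)))
    rw [← hc i₀]
    have := hw i₀
    positivity
  set T := analysisOp W w with hT
  set A₀lin : FFSpace W →ₗ[𝕜] H := Sinv ∘ₗ synthOp W w with hA₀lin
  -- the canonical blocks
  have hG0 : ∀ i, A₀lin ∘ₗ (MJ W {i} ∘ₗ T) = ((w i ^ 2 : ℝ) : 𝕜) • (Sinv ∘ₗ projL (W i)) := by
    intro i
    have e : A₀lin ∘ₗ (MJ W {i} ∘ₗ T) = Sinv ∘ₗ (synthOp W w ∘ₗ (MJ W {i} ∘ₗ T)) := rfl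
    rw [e]
    have e2 : synthOp W w ∘ₗ (MJ W {i} ∘ₗ T) = ((w i ^ 2 : ℝ) : 𝕜) • projL (W i) :=
      synth_MJ_analysis W w i
    rw [e2]
    apply LinearMap.ext; intro f
    simp
  have hnorm0 : ∀ i, ‖Phi (A₀lin ∘ₗ (MJ W {i} ∘ₗ T))‖ = c := by
    intro i
    rw [← sqrt_frobSq_eq, hG0 i]
    have e : frobSq (((w i ^ 2 : ℝ) : 𝕜) • (Sinv ∘ₗ projL (W i)))
        = (w i ^ 2 * ‖Phi (Sinv ∘ₗ projL (W i))‖) ^ 2 := by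
      rw [frobSq_eq_norm_Phi_sq, Phi_smul, norm_smul, RCLike.norm_ofReal,
        abs_of_nonneg (sq_nonneg _)]
    rw [e, Real.sqrt_sq (by positivity), ← sqrt_frobSq_eq, hc i]
  -- left-inverse transfer between CLM and linear levels
  have hli : ∀ A : FFSpace W →L[𝕜] H,
      (A ∘L LinearMap.toContinuousLinearMap T = ContinuousLinearMap.id 𝕜 H) ↔
      ((A : FFSpace W →ₗ[𝕜] H) ∘ₗ T = LinearMap.id) := by
    intro A
    constructor
    · intro hA
      apply LinearMap.ext; intro f
      have := congrArg (fun (M : H →L[𝕜] H) => M f) hA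
      simpa using this
    · intro hA
      apply ContinuousLinearMap.ext; intro f
      have := congrArg (fun (M : H →ₗ[𝕜] H) => M f) hA
      simpa using this
  have hA₀coe : ((LinearMap.toContinuousLinearMap A₀lin : FFSpace W →L[𝕜] H) :
      FFSpace W →ₗ[𝕜] H) = A₀lin := LinearMap.coe_toContinuousLinearMap A₀lin
  have hA₀left : LinearMap.toContinuousLinearMap A₀lin ∘L LinearMap.toContinuousLinearMap T
      = ContinuousLinearMap.id 𝕜 H := by
    rw [hli]
    rw [hA₀coe]
    exact canonical_left_inverse W w Sinv h'
  -- the key balance identity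
  have key : ∀ B : FFSpace W →ₗ[𝕜] H, B ∘ₗ T = LinearMap.id →
      ∑ i, (w i ^ 2)⁻¹ * RCLike.re
          (inner (𝕜 := 𝕜) (Phi (A₀lin ∘ₗ (MJ W {i} ∘ₗ T))) (Phi (B ∘ₗ (MJ W {i} ∘ₗ T))))
        = RCLike.re (LinearMap.trace 𝕜 H (LinearMap.adjoint Sinv)) := by
    intro B hB
    have e : ∀ i, RCLike.re (inner (𝕜 := 𝕜) (Phi (A₀lin ∘ₗ (MJ W {i} ∘ₗ T)))
          (Phi (B ∘ₗ (MJ W {i} ∘ₗ T))))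
        = w i ^ 2 * RCLike.re (LinearMap.trace 𝕜 H
            (LinearMap.adjoint Sinv ∘ₗ (B ∘ₗ (MJ W {i} ∘ₗ T)))) := by
      intro i
      rw [← trace_adjoint_comp, hG0 i, trace_key, RCLike.re_ofReal_mul]
    calc ∑ i, (w i ^ 2)⁻¹ * RCLike.re (inner (𝕜 := 𝕜) (Phi (A₀lin ∘ₗ (MJ W {i} ∘ₗ T)))
            (Phi (B ∘ₗ (MJ W {i} ∘ₗ T))))
        = ∑ i, RCLike.re (LinearMap.trace 𝕜 H
            (LinearMap.adjoint Sinv ∘ₗ (B ∘ₗ (MJ W {i} ∘ₗ T)))) := by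
          apply Finset.sum_congr rfl
          intro i _
          rw [e i, ← mul_assoc, inv_mul_cancel₀ (pow_ne_zero 2 (hw i).ne'), one_mul]
      _ = RCLike.re (∑ i, LinearMap.trace 𝕜 H
            (LinearMap.adjoint Sinv ∘ₗ (B ∘ₗ (MJ W {i} ∘ₗ T)))) := by
          rw [map_sum]
      _ = RCLike.re (LinearMap.trace 𝕜 H (LinearMap.adjoint Sinv)) := by
          rw [← map_sum (LinearMap.trace 𝕜 H), sum_block, hB, LinearMap.comp_id]
  have hsumw : (0 : ℝ) < ∑ i, (w i ^ 2)⁻¹ :=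
    Finset.sum_pos (fun i _ => by have := hw i; positivity) (Finset.univ_nonempty)
  -- lower bound for any left inverse
  have hlb : ∀ B : FFSpace W →L[𝕜] H,
      B ∘L LinearMap.toContinuousLinearMap T = ContinuousLinearMap.id 𝕜 H →
      c ≤ maxErr W w B := by
    intro B hB
    have hBlin : ((B : FFSpace W →ₗ[𝕜] H)) ∘ₗ T = LinearMap.id := (hli B).mp hB
    have hle : ∀ i, ‖Phi (((B : FFSpace W →ₗ[𝕜] H)) ∘ₗ (MJ W {i} ∘ₗ T))‖ ≤ maxErr W w B := by
      intro i
      rw [← sqrt_frobSq_eq]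
      have hrfl : maxErr W w B = ⨆ i : Fin m, Real.sqrt (frobSq
          (((B : FFSpace W →ₗ[𝕜] H)) ∘ₗ MJ W {i} ∘ₗ T)) := rfl
      rw [hrfl]
      exact le_ciSup (f := fun i : Fin m => Real.sqrt (frobSq
        (((B : FFSpace W →ₗ[𝕜] H)) ∘ₗ MJ W {i} ∘ₗ T))) (Finite.bddAbove_range _) i
    have k1 := key _ hBlin
    have k2 := key A₀lin (canonical_left_inverse W w Sinv h')
    have hA0t : ∀ i, RCLike.re (inner (𝕜 := 𝕜) (Phi (A₀lin ∘ₗ (MJ W {i} ∘ₗ T)))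
        (Phi (A₀lin ∘ₗ (MJ W {i} ∘ₗ T)))) = c ^ 2 := by
      intro i
      rw [inner_self_eq_norm_sq (𝕜 := 𝕜), hnorm0 i]
    have hsum : ∑ i, (w i ^ 2)⁻¹ * c ^ 2
        = ∑ i, (w i ^ 2)⁻¹ * RCLike.re (inner (𝕜 := 𝕜) (Phi (A₀lin ∘ₗ (MJ W {i} ∘ₗ T)))
            (Phi (((B : FFSpace W →ₗ[𝕜] H)) ∘ₗ (MJ W {i} ∘ₗ T)))) := by
      rw [k1, ← k2]
      exact Finset.sum_congr rfl fun i _ => by rw [hA0t i]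
    have hbound : ∑ i, (w i ^ 2)⁻¹ * c ^ 2 ≤ ∑ i, (w i ^ 2)⁻¹ * (c * maxErr W w B) := by
      rw [hsum]
      apply Finset.sum_le_sum
      intro i _
      apply mul_le_mul_of_nonneg_left _ (by positivity)
      calc RCLike.re (inner (𝕜 := 𝕜) (Phi (A₀lin ∘ₗ (MJ W {i} ∘ₗ T)))
              (Phi (((B : FFSpace W →ₗ[𝕜] H)) ∘ₗ (MJ W {i} ∘ₗ T))))
          ≤ ‖Phi (A₀lin ∘ₗ (MJ W {i} ∘ₗ T))‖ *
              ‖Phi (((B : FFSpace W →ₗ[𝕜] H)) ∘ₗ (MJ W {i} ∘ₗ T))‖ := re_inner_le_norm _ _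
        _ ≤ c * maxErr W w B := by
            rw [hnorm0 i]
            exact mul_le_mul_of_nonneg_left (hle i) hc0.le
    rw [← Finset.sum_mul, ← Finset.sum_mul] at hbound
    have h2 : c ^ 2 ≤ c * maxErr W w B := le_of_mul_le_mul_left
      (by calc (∑ i, (w i ^ 2)⁻¹) * c ^ 2 ≤ (∑ i, (w i ^ 2)⁻¹) * (c * maxErr W w B) := hbound)
      hsumw
    nlinarith [h2, hc0]
  -- the infimum equals c
  have hmaxA0 : maxErr W w (LinearMap.toContinuousLinearMap A₀lin) = c := by
    have e : ∀ i : Fin m, Real.sqrt (frobSq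
        (((LinearMap.toContinuousLinearMap A₀lin : FFSpace W →L[𝕜] H) : FFSpace W →ₗ[𝕜] H)
          ∘ₗ MJ W {i} ∘ₗ T)) = c := by
      intro i
      rw [hA₀coe, sqrt_frobSq_eq]
      exact hnorm0 i
    rw [maxErr, iSup_congr e, ciSup_const]
  haveI hNE : Nonempty {B : FFSpace W →L[𝕜] H //
      B ∘L LinearMap.toContinuousLinearMap (analysisOp W w) = ContinuousLinearMap.id 𝕜 H} :=
    ⟨⟨LinearMap.toContinuousLinearMap A₀lin, hA₀left⟩⟩
  have hiInf : (⨅ B : {B : FFSpace W →L[𝕜] H //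
      B ∘L LinearMap.toContinuousLinearMap (analysisOp W w) = ContinuousLinearMap.id 𝕜 H},
        maxErr W w ↑B) = c := by
    apply le_antisymm
    · have := ciInf_le (f := fun B : {B : FFSpace W →L[𝕜] H //
          B ∘L LinearMap.toContinuousLinearMap (analysisOp W w) = ContinuousLinearMap.id 𝕜 H} =>
            maxErr W w ↑B)
          ⟨c, by rintro x ⟨B, rfl⟩; exact hlb ↑B B.2⟩ ⟨LinearMap.toContinuousLinearMap A₀lin, hA₀left⟩
      rw [hmaxA0] at this
      exact this
    · exact le_ciInf fun B => hlb ↑B B.2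
  -- final set equality
  ext B
  simp only [optimalSet, Set.mem_setOf_eq, Set.mem_singleton_iff]
  constructor
  · rintro ⟨hBleft, hBmax⟩
    have hBc : maxErr W w B = c := by rw [hBmax, hiInf]
    have hBlin : ((B : FFSpace W →ₗ[𝕜] H)) ∘ₗ T = LinearMap.id := (hli B).mp hBleft
    have hle : ∀ i, ‖Phi (((B : FFSpace W →ₗ[𝕜] H)) ∘ₗ (MJ W {i} ∘ₗ T))‖ ≤ c := by
      intro i
      rw [← sqrt_frobSq_eq, ← hBc]
      have hrfl : maxErr W w B = ⨆ i : Fin m, Real.sqrt (frobSq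
          (((B : FFSpace W →ₗ[𝕜] H)) ∘ₗ MJ W {i} ∘ₗ T)) := rfl
      rw [hrfl]
      exact le_ciSup (f := fun i : Fin m => Real.sqrt (frobSq
        (((B : FFSpace W →ₗ[𝕜] H)) ∘ₗ MJ W {i} ∘ₗ T))) (Finite.bddAbove_range _) i
    have k1 := key _ hBlin
    have k2 := key A₀lin (canonical_left_inverse W w Sinv h')
    have hA0t : ∀ i, RCLike.re (inner (𝕜 := 𝕜) (Phi (A₀lin ∘ₗ (MJ W {i} ∘ₗ T)))
        (Phi (A₀lin ∘ₗ (MJ W {i} ∘ₗ T)))) = c ^ 2 := by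
      intro i
      rw [inner_self_eq_norm_sq (𝕜 := 𝕜), hnorm0 i]
    have hub : ∀ i, RCLike.re (inner (𝕜 := 𝕜) (Phi (A₀lin ∘ₗ (MJ W {i} ∘ₗ T)))
        (Phi (((B : FFSpace W →ₗ[𝕜] H)) ∘ₗ (MJ W {i} ∘ₗ T)))) ≤ c ^ 2 := by
      intro i
      calc RCLike.re (inner (𝕜 := 𝕜) (Phi (A₀lin ∘ₗ (MJ W {i} ∘ₗ T)))
              (Phi (((B : FFSpace W →ₗ[𝕜] H)) ∘ₗ (MJ W {i} ∘ₗ T))))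
          ≤ ‖Phi (A₀lin ∘ₗ (MJ W {i} ∘ₗ T))‖ *
              ‖Phi (((B : FFSpace W →ₗ[𝕜] H)) ∘ₗ (MJ W {i} ∘ₗ T))‖ := re_inner_le_norm _ _
        _ ≤ c ^ 2 := by
            rw [hnorm0 i, sq]
            exact mul_le_mul_of_nonneg_left (hle i) hc0.le
    have hsum0 : ∑ i, (w i ^ 2)⁻¹ * (c ^ 2 - RCLike.re (inner (𝕜 := 𝕜)
        (Phi (A₀lin ∘ₗ (MJ W {i} ∘ₗ T)))
        (Phi (((B : FFSpace W →ₗ[𝕜] H)) ∘ₗ (MJ W {i} ∘ₗ T))))) = 0 := by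
      have hc2 : ∑ i, (w i ^ 2)⁻¹ * c ^ 2
          = RCLike.re (LinearMap.trace 𝕜 H (LinearMap.adjoint Sinv)) := by
        rw [← k2]
        exact Finset.sum_congr rfl fun i _ => by rw [hA0t i]
      simp only [mul_sub, Finset.sum_sub_distrib]
      rw [hc2, k1, sub_self]
    have hre : ∀ i, RCLike.re (inner (𝕜 := 𝕜) (Phi (A₀lin ∘ₗ (MJ W {i} ∘ₗ T)))
        (Phi (((B : FFSpace W →ₗ[𝕜] H)) ∘ₗ (MJ W {i} ∘ₗ T)))) = c ^ 2 := by
      intro i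
      have hterm := (Finset.sum_eq_zero_iff_of_nonneg (fun i _ => by
        have h1 : (0:ℝ) ≤ (w i ^ 2)⁻¹ := by positivity
        have h2 := hub i
        nlinarith)).mp hsum0 i (Finset.mem_univ i)
      have hwne : ((w i ^ 2)⁻¹ : ℝ) ≠ 0 := ne_of_gt (inv_pos.mpr (pow_pos (hw i) 2))
      have := mul_eq_zero.mp hterm
      rcases this with h1 | h2
      · exact absurd h1 hwne
      · linarith [sub_eq_zero.mp h2]
    have hPhiEq : ∀ i, Phi (((B : FFSpace W →ₗ[𝕜] H)) ∘ₗ (MJ W {i} ∘ₗ T))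
        = Phi (A₀lin ∘ₗ (MJ W {i} ∘ₗ T)) := by
      intro i
      have hnz : ‖Phi (A₀lin ∘ₗ (MJ W {i} ∘ₗ T))
          - Phi (((B : FFSpace W →ₗ[𝕜] H)) ∘ₗ (MJ W {i} ∘ₗ T))‖ ^ 2 ≤ 0 := by
        rw [norm_sub_sq (𝕜 := 𝕜), hnorm0 i, hre i]
        have := hle i
        nlinarith [norm_nonneg (Phi (((B : FFSpace W →ₗ[𝕜] H)) ∘ₗ (MJ W {i} ∘ₗ T)))]
      have : ‖Phi (A₀lin ∘ₗ (MJ W {i} ∘ₗ T))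
          - Phi (((B : FFSpace W →ₗ[𝕜] H)) ∘ₗ (MJ W {i} ∘ₗ T))‖ = 0 := by
        nlinarith [norm_nonneg (Phi (A₀lin ∘ₗ (MJ W {i} ∘ₗ T))
          - Phi (((B : FFSpace W →ₗ[𝕜] H)) ∘ₗ (MJ W {i} ∘ₗ T)))]
      have := sub_eq_zero.mp (norm_eq_zero.mp this)
      exact this.symm
    have hGeq : ∀ i, ((B : FFSpace W →ₗ[𝕜] H)) ∘ₗ (MJ W {i} ∘ₗ T)
        = A₀lin ∘ₗ (MJ W {i} ∘ₗ T) := fun i => Phi_injective (hPhiEq i)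
    -- conclude B = A₀
    apply ContinuousLinearMap.coe_injective
    apply LinearMap.ext
    intro g
    have hdec : ∀ (C : FFSpace W →ₗ[𝕜] H), C g = ∑ i, C ((MJ W {i}) g) := by
      intro C
      rw [← map_sum, sum_MJ_apply]
    have hMi : ∀ i, (MJ W {i} ∘ₗ T) ((((w i)⁻¹ : ℝ) : 𝕜) • ((g i : H))) = (MJ W {i}) g := by
      intro i
      ext j
      simp only [LinearMap.comp_apply, MJ, analysisOp, LinearMap.coe_mk, AddHom.coe_mk, hT]
      by_cases hj : j ∈ ({i} : Finset (Fin m))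
      · have hji : j = i := Finset.mem_singleton.mp hj
        subst hji
        simp only [hj, if_true]
        rw [map_smul, Submodule.orthogonalProjectionOnto_mem_subspace_eq_self, smul_smul,
          ← RCLike.ofReal_mul, mul_inv_cancel₀ (hw j).ne', RCLike.ofReal_one, one_smul]
      · simp [hj]
    calc (B : FFSpace W →ₗ[𝕜] H) g = ∑ i, (B : FFSpace W →ₗ[𝕜] H) ((MJ W {i}) g) := hdec _
      _ = ∑ i, A₀lin ((MJ W {i}) g) := by
          apply Finset.sum_congr rfl
          intro i _
          have happ := LinearMap.congr_fun (hGeq i) ((((w i)⁻¹ : ℝ) : 𝕜) • ((g i : H)))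
          simp only [LinearMap.comp_apply] at happ
          rw [← LinearMap.comp_apply (MJ W {i}) T, hMi i] at happ
          exact happ
      _ = A₀lin g := (hdec A₀lin).symm
      _ = ((LinearMap.toContinuousLinearMap A₀lin : FFSpace W →L[𝕜] H) :
            FFSpace W →ₗ[𝕜] H) g := by rw [hA₀coe]
  · rintro rfl
    exact ⟨hA₀left, by rw [hmaxA0, hiInf]⟩
end
end
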